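/- Let A = F[X,Y,Z] be a polynomial ring over a field F, N ≥ 2 with char F not dividing N, k ∈ ℕ, and q a power of char F. Let J = (X^N + Y^N + Z^N) + (Y^q, Z^q)^k. Then with respect to graded reverse lexicographic order with X > Y > Z, the initial ideal of J is (X^N) + (Y^q, Z^q)^k. -/

import Mathlib

open MvPolynomial

/-- The comparison key for the graded reverse lexicographic order on monomials in three
variables `X = X 0 > Y = X 1 > Z = X 2`: exponents `σ` are compared by total degree,
then (to break ties) by smaller `Z`-exponent (i.e. larger `σ 0 + σ 1`), then by smaller
`Y`-exponent (i.e. larger `σ 0`). The key is strictly monotone for grevlex, so `σ` is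
grevlex-larger than `τ` iff `grevlexKey τ < grevlexKey σ` lexicographically. -/
def grevlexKey (σ : Fin 3 →₀ ℕ) : Lex (ℕ × ℕ × ℕ) :=
  toLex (σ 0 + σ 1 + σ 2, σ 0 + σ 1, σ 0)

/-- The initial ideal of an ideal `J ⊆ F[X,Y,Z]` with respect to the graded reverse
lexicographic order with `X > Y > Z`: the ideal generated by the leading monomials of
the nonzero elements of `J`. -/
noncomputable def initialIdeal {F : Type*} [Field F] (J : Ideal (MvPolynomial (Fin 3) F)) :
    Ideal (MvPolynomial (Fin 3) F) :=
  Ideal.span {m | ∃ f ∈ J, f ≠ 0 ∧ ∃ σ ∈ f.support,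
    (∀ τ ∈ f.support, grevlexKey τ ≤ grevlexKey σ) ∧
    m = MvPolynomial.monomial σ (1 : F)}

private lemma key_le_iff (σ τ : Fin 3 →₀ ℕ) :
    grevlexKey σ ≤ grevlexKey τ ↔
      (σ 0 + σ 1 + σ 2 < τ 0 + τ 1 + τ 2 ∨
        (σ 0 + σ 1 + σ 2 = τ 0 + τ 1 + τ 2 ∧ σ 0 + σ 1 ≤ τ 0 + τ 1 ∧ σ 0 ≤ τ 0)) := by
  simp [grevlexKey, Prod.Lex.le_iff, Prod.le_def]

private lemma key_eq_iff (σ τ : Fin 3 →₀ ℕ) :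
    grevlexKey σ = grevlexKey τ ↔
      (σ 0 + σ 1 + σ 2 = τ 0 + τ 1 + τ 2 ∧ σ 0 + σ 1 = τ 0 + τ 1 ∧ σ 0 = τ 0) := by
  simp [grevlexKey, Prod.ext_iff]

/-- The exponents of the natural monomial generators of `(Y^q, Z^q)^k`. -/
private def Sk (q k : ℕ) : Set (Fin 3 →₀ ℕ) :=
  {ν | ∃ r ≤ k, ν = Finsupp.single 1 (q * r) + Finsupp.single 2 (q * (k - r))}

private lemma Mk_eq {F : Type*} [Field F] (q k : ℕ) :
    (Ideal.span {(X 1 : MvPolynomial (Fin 3) F) ^ q, X 2 ^ q}) ^ k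
      = Ideal.span ((fun s => monomial s (1 : F)) '' Sk q k) := by
  induction k with
  | zero =>
    rw [pow_zero, Ideal.one_eq_top, eq_comm, Ideal.eq_top_iff_one]
    apply Ideal.subset_span
    refine ⟨0, ⟨0, le_refl 0, by simp⟩, by simp⟩
  | succ k ih =>
    apply le_antisymm
    · rw [pow_succ, ih, Ideal.span_mul_span']
      rw [Ideal.span_le]
      rintro x ⟨x₁, ⟨ν, ⟨r, hr, rfl⟩, rfl⟩, x₂, hx₂, rfl⟩
      dsimp only
      apply Ideal.subset_span
      rcases hx₂ with rfl | rfl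
      · refine ⟨Finsupp.single 1 (q * (r+1)) + Finsupp.single 2 (q * (k + 1 - (r+1))),
          ⟨r + 1, by omega, rfl⟩, ?_⟩
        rw [X_pow_eq_monomial, monomial_mul, mul_one]
        have e2 : k + 1 - (r + 1) = k - r := by omega
        rw [e2, add_right_comm, ← Finsupp.single_add, mul_add, mul_one]
      · refine ⟨Finsupp.single 1 (q * r) + Finsupp.single 2 (q * (k + 1 - r)),
          ⟨r, by omega, rfl⟩, ?_⟩
        rw [X_pow_eq_monomial, monomial_mul, mul_one]
        have e2 : k + 1 - r = (k - r) + 1 := by omega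
        rw [e2, add_assoc, ← Finsupp.single_add, mul_add, mul_one]
    · rw [Ideal.span_le]
      rintro x ⟨ν, ⟨r, hr, rfl⟩, rfl⟩
      dsimp only
      have h1 : ((X 1 : MvPolynomial (Fin 3) F) ^ q) ^ r ∈
          (Ideal.span {(X 1 : MvPolynomial (Fin 3) F) ^ q, X 2 ^ q}) ^ r :=
        Ideal.pow_mem_pow (Ideal.subset_span (by simp)) r
      have h2 : ((X 2 : MvPolynomial (Fin 3) F) ^ q) ^ (k + 1 - r) ∈
          (Ideal.span {(X 1 : MvPolynomial (Fin 3) F) ^ q, X 2 ^ q}) ^ (k + 1 - r) :=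
        Ideal.pow_mem_pow (Ideal.subset_span (by simp)) _
      have e : ((X 1 : MvPolynomial (Fin 3) F) ^ q) ^ r * (X 2 ^ q) ^ (k + 1 - r)
          = monomial (Finsupp.single 1 (q * r) + Finsupp.single 2 (q * (k + 1 - r))) (1 : F) := by
        rw [← pow_mul, ← pow_mul, X_pow_eq_monomial, X_pow_eq_monomial, monomial_mul, mul_one]
      have h3 := Ideal.mul_mem_mul h1 h2
      rw [← pow_add, Nat.add_sub_cancel' hr, e] at h3
      exact h3

private lemma initialIdeal_aux {F : Type*} [Field F] (N : ℕ) (hN : 2 ≤ N)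
    (P : (Fin 3 →₀ ℕ) → Prop) [DecidablePred P]
    (f : MvPolynomial (Fin 3) F)
    (hf : f = X 0 ^ N + X 1 ^ N + X 2 ^ N)
    (Mk : Ideal (MvPolynomial (Fin 3) F))
    (hmemMk : ∀ (h : MvPolynomial (Fin 3) F), h ∈ Mk ↔ ∀ μ ∈ h.support, P μ)
    (hPind : ∀ μ ν : Fin 3 →₀ ℕ, μ 1 = ν 1 → μ 2 = ν 2 → P μ → P ν)
    (hsuppf : f.support ⊆ {Finsupp.single 0 N, Finsupp.single 1 N, Finsupp.single 2 N})
    (g : MvPolynomial (Fin 3) F) (a z : MvPolynomial (Fin 3) F) (hz : z ∈ Mk)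
    (hyz : a * f + z = g) (hg0 : g ≠ 0)
    (σ : Fin 3 →₀ ℕ) (hσ : σ ∈ g.support)
    (hmax : ∀ τ ∈ g.support, grevlexKey τ ≤ grevlexKey σ)
    (hPσ : ¬ P σ) (hXσ : ¬ N ≤ σ 0) : False := by
  classical
  -- decompose a
  set a₂ : MvPolynomial (Fin 3) F :=
    ∑ μ ∈ a.support.filter (fun μ => P μ), monomial μ (coeff μ a) with ha₂
  have hco2 : ∀ τ, coeff τ a₂ = if τ ∈ a.support ∧ P τ then coeff τ a else 0 := by
    intro τ
    rw [ha₂, coeff_sum]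
    simp_rw [coeff_monomial]
    rw [Finset.sum_ite_eq' (a.support.filter (fun μ => P μ)) τ (fun μ => coeff μ a)]
    simp [Finset.mem_filter, and_comm]
  set a₁ : MvPolynomial (Fin 3) F := a - a₂ with ha₁
  have hco1 : ∀ τ, P τ → coeff τ a₁ = 0 := by
    intro τ hPτ
    rw [ha₁, coeff_sub, hco2]
    by_cases h : τ ∈ a.support
    · rw [if_pos ⟨h, hPτ⟩, sub_self]
    · rw [if_neg (fun hc => h hc.1), notMem_support_iff.mp h, sub_zero]
  have ha₂Mk : a₂ ∈ Mk := by
    rw [hmemMk]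
    intro μ hμ
    have := mem_support_iff.mp hμ
    rw [hco2] at this
    by_contra hPμ
    exact this (by rw [if_neg (fun hc => hPμ hc.2)])
  set m' : MvPolynomial (Fin 3) F := a₂ * f + z with hm'
  have hm'Mk : m' ∈ Mk := add_mem (Ideal.mul_mem_right f _ ha₂Mk) hz
  have hm'supp : ∀ μ ∈ m'.support, P μ := (hmemMk m').mp hm'Mk
  have hg : g = a₁ * f + m' := by
    rw [← hyz, hm', ha₁]
    ring
  -- σ comes from a₁ * f
  have hσg : coeff σ g ≠ 0 := mem_support_iff.mp hσ
  have hσm' : coeff σ m' = 0 := by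
    by_contra h
    exact hPσ (hm'supp σ (mem_support_iff.mpr h))
  have hσa₁f : coeff σ (a₁ * f) ≠ 0 := by
    rw [hg, coeff_add, hσm', add_zero] at hσg
    exact hσg
  obtain ⟨τ, hτ, μ, hμ, hτμ⟩ := Finset.mem_add.mp
    (MvPolynomial.support_mul a₁ f (mem_support_iff.mpr hσa₁f))
  have hμ3 := hsuppf hμ
  -- maximal element above τ
  set s : Set (Fin 3 →₀ ℕ) := {b | b ∈ a₁.support ∧ grevlexKey τ ≤ grevlexKey b} with hs
  have hsfin : s.Finite := Set.Finite.subset a₁.support.finite_toSet (fun b hb => hb.1)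
  have hsne : s.Nonempty := ⟨τ, hτ, le_of_eq rfl⟩
  obtain ⟨τs, hτs, hmaxs⟩ : ∃ a ∈ s, ∀ a' ∈ s, grevlexKey a ≤ grevlexKey a' →
      grevlexKey a = grevlexKey a' := by
    obtain ⟨i, hi, hm⟩ := Set.Finite.exists_maximalFor grevlexKey s hsfin hsne
    exact ⟨i, hi, fun j hj hle => le_antisymm hle (hm hj hle)⟩
  have hττs : grevlexKey τ ≤ grevlexKey τs := hτs.2
  rw [key_le_iff] at hττs
  set ρ : Fin 3 →₀ ℕ := τs + Finsupp.single 0 N with hρ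
  have eρ0 : ρ 0 = τs 0 + N := by simp [hρ, Finsupp.single_apply]
  have eρ1 : ρ 1 = τs 1 := by simp [hρ, Finsupp.single_apply]
  have eρ2 : ρ 2 = τs 2 := by simp [hρ, Finsupp.single_apply]
  have hPτs : ¬ P τs := fun hPt => mem_support_iff.mp hτs.1 (hco1 τs hPt)
  -- coeff of ρ in m' vanishes
  have hρm' : coeff ρ m' = 0 := by
    by_contra h
    exact hPτs (hPind ρ τs eρ1 eρ2 (hm'supp ρ (mem_support_iff.mpr h)))
  -- coeff of ρ in a₁ * f is the coeff of τs in a₁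
  have hmul : a₁ * f = a₁ * X 0 ^ N + a₁ * X 1 ^ N + a₁ * X 2 ^ N := by rw [hf]; ring
  have h0 : coeff ρ (a₁ * X 0 ^ N) = coeff τs a₁ := by
    rw [hρ, X_pow_eq_monomial, coeff_mul_monomial, mul_one]
  have haux : ∀ i : Fin 3, i = 1 ∨ i = 2 → coeff ρ (a₁ * X i ^ N) = 0 := by
    rintro i hi
    rw [X_pow_eq_monomial, coeff_mul_monomial']
    split_ifs with hle
    · rw [mul_one]
      by_contra h
      set τ' : Fin 3 →₀ ℕ := ρ - Finsupp.single i N with hτ'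
      have hτ'supp : τ' ∈ a₁.support := mem_support_iff.mpr h
      have hNi : N ≤ ρ i := by
        have := Finsupp.le_def.mp hle i
        simpa [Finsupp.single_apply] using this
      have e0 : τ' 0 = ρ 0 - (if i = 0 then N else 0) := by
        simp [hτ', Finsupp.tsub_apply, Finsupp.single_apply]
      have e1 : τ' 1 = ρ 1 - (if i = 1 then N else 0) := by
        simp [hτ', Finsupp.tsub_apply, Finsupp.single_apply]
      have e2 : τ' 2 = ρ 2 - (if i = 2 then N else 0) := by
        simp [hτ', Finsupp.tsub_apply, Finsupp.single_apply]
      rcases hi with rfl | rfl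
      · rw [eρ1] at hNi
        have e0 : τ' 0 = ρ 0 := by simp [hτ', Finsupp.tsub_apply, Finsupp.single_apply]
        have e1 : τ' 1 = ρ 1 - N := by simp [hτ', Finsupp.tsub_apply, Finsupp.single_apply]
        have e2 : τ' 2 = ρ 2 := by simp [hτ', Finsupp.tsub_apply, Finsupp.single_apply]
        have hkey1 : grevlexKey τs ≤ grevlexKey τ' := (key_le_iff _ _).mpr (by omega)
        have hτ'in : τ' ∈ s := ⟨hτ'supp, (key_le_iff _ _).mpr (by omega)⟩
        have heq := hmaxs τ' hτ'in hkey1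
        rw [key_eq_iff] at heq
        omega
      · rw [eρ2] at hNi
        have e0 : τ' 0 = ρ 0 := by simp [hτ', Finsupp.tsub_apply, Finsupp.single_apply]
        have e1 : τ' 1 = ρ 1 := by simp [hτ', Finsupp.tsub_apply, Finsupp.single_apply]
        have e2 : τ' 2 = ρ 2 - N := by simp [hτ', Finsupp.tsub_apply, Finsupp.single_apply]
        have hkey1 : grevlexKey τs ≤ grevlexKey τ' := (key_le_iff _ _).mpr (by omega)
        have hτ'in : τ' ∈ s := ⟨hτ'supp, (key_le_iff _ _).mpr (by omega)⟩
        have heq := hmaxs τ' hτ'in hkey1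
        rw [key_eq_iff] at heq
        omega
    · rfl
  have h1 := haux 1 (Or.inl rfl)
  have h2 := haux 2 (Or.inr rfl)
  have hρa : coeff ρ (a₁ * f) = coeff τs a₁ := by
    rw [hmul, coeff_add, coeff_add, h0, h1, h2, add_zero, add_zero]
  have hρg : coeff ρ g ≠ 0 := by
    rw [hg, coeff_add, hρa, hρm', add_zero]
    exact MvPolynomial.mem_support_iff.mp hτs.1
  have hkρσ := hmax ρ (MvPolynomial.mem_support_iff.mpr hρg)
  rw [key_le_iff] at hkρσ
  simp only [Finset.mem_insert, Finset.mem_singleton] at hμ3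
  rcases hμ3 with rfl | rfl | rfl
  · subst hτμ
    simp only [Finsupp.add_apply, Finsupp.single_apply] at hXσ
    simp at hXσ
  · subst hτμ
    simp only [Finsupp.add_apply, Finsupp.single_apply] at hkρσ hXσ
    simp at hkρσ hXσ
    omega
  · subst hτμ
    simp only [Finsupp.add_apply, Finsupp.single_apply] at hkρσ hXσ
    simp at hkρσ hXσ
    omega

/-- **The initial ideal of `(X^N + Y^N + Z^N, (Y^q, Z^q)^k)`.** Let `A = F[X,Y,Z]`, let
`N ≥ 2` with `char F = p` prime not dividing `N`, let `k ∈ ℕ` and `q = p^e`. If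
`J = (X^N + Y^N + Z^N) + (Y^q, Z^q)^k`, then with respect to the graded reverse
lexicographic order with `X > Y > Z`, the initial ideal of `J` is
`(X^N) + (Y^q, Z^q)^k`. -/
theorem initialIdeal_diagonal {F : Type*} [Field F] (p : ℕ) [Fact p.Prime] [CharP F p]
    (N : ℕ) (hN : 2 ≤ N) (hpN : ¬ p ∣ N) (k e : ℕ) (q : ℕ) (hq : q = p ^ e) :
    initialIdeal
        (Ideal.span {(X 0 : MvPolynomial (Fin 3) F) ^ N + X 1 ^ N + X 2 ^ N} +
          (Ideal.span {(X 1 : MvPolynomial (Fin 3) F) ^ q, X 2 ^ q}) ^ k) =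
      Ideal.span {(X 0 : MvPolynomial (Fin 3) F) ^ N} +
        (Ideal.span {(X 1 : MvPolynomial (Fin 3) F) ^ q, X 2 ^ q}) ^ k := by
  classical
  set f : MvPolynomial (Fin 3) F := X 0 ^ N + X 1 ^ N + X 2 ^ N with hf
  set Mk : Ideal (MvPolynomial (Fin 3) F) :=
    (Ideal.span {(X 1 : MvPolynomial (Fin 3) F) ^ q, X 2 ^ q}) ^ k with hMk
  set J : Ideal (MvPolynomial (Fin 3) F) := Ideal.span {f} + Mk with hJ
  set P : (Fin 3 →₀ ℕ) → Prop := fun μ => ∃ ν ∈ Sk q k, ν ≤ μ with hP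
  have hmemMk : ∀ (h : MvPolynomial (Fin 3) F), h ∈ Mk ↔ ∀ μ ∈ h.support, P μ := by
    intro h
    rw [hMk, Mk_eq, mem_ideal_span_monomial_image]
  have hPind : ∀ μ ν : Fin 3 →₀ ℕ, μ 1 = ν 1 → μ 2 = ν 2 → P μ → P ν := by
    rintro μ ν h1 h2 ⟨w, hw, hle⟩
    obtain ⟨r, hr, rfl⟩ := hw
    refine ⟨_, ⟨r, hr, rfl⟩, ?_⟩
    intro i
    rcases eq_or_ne i 1 with rfl | hi1
    · have := hle 1
      simp only [Finsupp.add_apply, Finsupp.single_apply] at this ⊢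
      simp only [if_pos rfl, if_neg (by decide : (2:Fin 3) ≠ 1)] at this ⊢
      omega
    rcases eq_or_ne i 2 with rfl | hi2
    · have := hle 2
      simp only [Finsupp.add_apply, Finsupp.single_apply] at this ⊢
      simp only [if_pos rfl, if_neg (by decide : (1:Fin 3) ≠ 2)] at this ⊢
      omega
    · simp [Finsupp.single_apply, Ne.symm hi1, Ne.symm hi2]
  have hsuppf : f.support ⊆ {Finsupp.single 0 N, Finsupp.single 1 N, Finsupp.single 2 N} := by
    rw [hf]
    refine (MvPolynomial.support_add).trans ?_
    intro x hx
    rcases Finset.mem_union.mp hx with hx | hx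
    · rcases Finset.mem_union.mp (MvPolynomial.support_add hx) with hx | hx
      · rw [support_X_pow] at hx
        simp only [Finset.mem_singleton] at hx
        simp [hx]
      · rw [support_X_pow] at hx
        simp only [Finset.mem_singleton] at hx
        simp [hx]
    · rw [support_X_pow] at hx
      simp only [Finset.mem_singleton] at hx
      simp [hx]
  have hsingle_ne : ∀ i j : Fin 3, i ≠ j → Finsupp.single i N ≠ Finsupp.single j N := by
    intro i j hij h
    have := DFunLike.congr_fun h i
    simp [Finsupp.single_apply, hij, Ne.symm] at this
    omega
  have hcoefff : coeff (Finsupp.single 0 N) f = 1 := by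
    rw [hf]
    simp [coeff_X_pow, hsingle_ne 1 0 (by decide), hsingle_ne 2 0 (by decide)]
  have hf0 : f ≠ 0 := fun h => by simp [h] at hcoefff
  apply le_antisymm
  · -- hard direction
    rw [initialIdeal, Ideal.span_le]
    rintro m ⟨g, hgJ, hg0, σ, hσ, hmax, rfl⟩
    rw [SetLike.mem_coe]
    obtain ⟨y, hy, z, hz, hyz⟩ := Submodule.mem_sup.mp hgJ
    obtain ⟨a, rfl⟩ := Ideal.mem_span_singleton'.mp hy
    by_cases hPσ : P σ
    · refine Ideal.mem_sup_right ((hmemMk _).mpr ?_)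
      intro μ hμ
      rw [support_monomial, if_neg one_ne_zero, Finset.mem_singleton] at hμ
      subst hμ
      exact hPσ
    by_cases hXσ : N ≤ σ 0
    · apply Ideal.mem_sup_left
      rw [Ideal.mem_span_singleton']
      refine ⟨monomial (σ - Finsupp.single 0 N) 1, ?_⟩
      rw [X_pow_eq_monomial, monomial_mul, mul_one,
        tsub_add_cancel_of_le (Finsupp.single_le_iff.mpr hXσ)]
    exact absurd (initialIdeal_aux N hN P f hf Mk hmemMk hPind hsuppf g a z hz hyz hg0
      σ hσ hmax hPσ hXσ) (by simp)
  · -- easy direction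
    rw [hJ]
    apply sup_le
    · rw [Ideal.span_le, Set.singleton_subset_iff]
      apply Ideal.subset_span
      refine ⟨f, Ideal.mem_sup_left (Ideal.subset_span rfl), hf0, Finsupp.single 0 N,
        MvPolynomial.mem_support_iff.mpr (by rw [hcoefff]; exact one_ne_zero), ?_,
        X_pow_eq_monomial⟩
      intro τ hτ
      have := hsuppf hτ
      simp only [Finset.mem_insert, Finset.mem_singleton] at this
      rcases this with rfl | rfl | rfl <;>
        · rw [key_le_iff]
          simp [Finsupp.single_apply]
    · rw [hMk, Mk_eq, Ideal.span_le]
      rintro x ⟨ν, hν, rfl⟩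
      dsimp only
      apply Ideal.subset_span
      refine ⟨monomial ν 1, Ideal.mem_sup_right (Ideal.subset_span ⟨ν, hν, rfl⟩),
        by simp, ν, ?_, ?_, rfl⟩
      · rw [support_monomial, if_neg (one_ne_zero)]; simp
      · intro τ hτ
        rw [support_monomial, if_neg (one_ne_zero)] at hτ
        simp only [Finset.mem_singleton] at hτ
        subst hτ
        rw [key_le_iff]; omega
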